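/- arXiv:1606.06103 — 2 statements merged into one kernel-verified Lean document; each statement's English description precedes it below -/
import Mathlib

section
/- (Chebyshev sieve.) Let 𝓐 be a finite set of cardinality N ≥ 1 and z ≥ 1 a real number. For each prime p ≤ z let 𝓐_p ⊆ 𝓐, and suppose given real numbers 0 ≤ δ_p < 1 and R_p with #𝓐_p = δ_p N + R_p; for distinct primes p, q ≤ z write #(𝓐_p ∩ 𝓐_q) = δ_p δ_q N + R_{p,q}, and set R_{p,p} = R_p. Let N(a) = #{p ≤ z : a ∈ 𝓐_p}, M(z) = (1/N)·Σ_{p ≤ z} #𝓐_p, U(z) = Σ_{p ≤ z} δ_p, and E(𝓐; z, M) = #{a ∈ 𝓐 : N(a) ≤ M}. If M(z) > 0, then E(𝓐; z, M(z)/2) ≤ (4N/M(z)²) · ( U(z) + (1/N)·Σ_{p,q ≤ z} |R_{p,q}| + (2U(z)/N)·Σ_{p ≤ z} |R_p| + ((1/N)·Σ_{p ≤ z} |R_p|)² ), where all sums run over primes p (and pairs of primes p, q, including p = q) at most z. -/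
open scoped Classical

/-- The primes `p ≤ z`. -/
noncomputable def primesUpTo (z : ℝ) : Finset ℕ :=
  (Finset.range (⌊z⌋₊ + 1)).filter Nat.Prime

set_option maxHeartbeats 1600000 in
/-- **Lemma 3.1 (the Chebyshev sieve).** Let `𝓐` be a finite set of cardinality
`N ≥ 1`, `z ≥ 1`, and for each prime `p ≤ z` let `𝓐_p ⊆ 𝓐` with
`#𝓐_p = δ_p N + R_p` (`0 ≤ δ_p < 1`), and for `p ≠ q`,
`#(𝓐_p ∩ 𝓐_q) = δ_p δ_q N + R_{p,q}`, with `R_{p,p} = R_p`.  With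
`N(a) = #{p ≤ z : a ∈ 𝓐_p}`, `M(z) = (1/N)Σ_{p ≤ z} #𝓐_p > 0` and
`U(z) = Σ_{p ≤ z} δ_p`, the number of `a ∈ 𝓐` with `N(a) ≤ M(z)/2` is at most
`(4N/M(z)²)(U(z) + (1/N)Σ_{p,q}|R_{p,q}| + (2U(z)/N)Σ_p|R_p| + ((1/N)Σ_p|R_p|)²)`. -/
theorem chebyshev_sieve {α : Type*} (A : Finset α) (hA : 1 ≤ A.card)
    (z : ℝ) (hz : 1 ≤ z)
    (Ap : ℕ → Finset α) (hAp : ∀ p ∈ primesUpTo z, Ap p ⊆ A)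
    (δ R : ℕ → ℝ)
    (hδ0 : ∀ p ∈ primesUpTo z, 0 ≤ δ p) (hδ1 : ∀ p ∈ primesUpTo z, δ p < 1)
    (hR : ∀ p ∈ primesUpTo z, ((Ap p).card : ℝ) = δ p * A.card + R p)
    (Rpq : ℕ → ℕ → ℝ)
    (hRpq : ∀ p ∈ primesUpTo z, ∀ q ∈ primesUpTo z, p ≠ q →
      (((Ap p ∩ Ap q).card : ℝ)) = δ p * δ q * A.card + Rpq p q)
    (hRpp : ∀ p ∈ primesUpTo z, Rpq p p = R p)
    (M : ℝ) (hM : M = (∑ p ∈ primesUpTo z, ((Ap p).card : ℝ)) / A.card)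
    (hMpos : 0 < M) :
    (Nat.card {a : α // a ∈ A ∧
        (((primesUpTo z).filter (fun p => a ∈ Ap p)).card : ℝ) ≤ M / 2} : ℝ)
      ≤ 4 * A.card / M ^ 2 *
        ((∑ p ∈ primesUpTo z, δ p)
          + (1 / A.card) * ∑ p ∈ primesUpTo z, ∑ q ∈ primesUpTo z, |Rpq p q|
          + (2 * (∑ p ∈ primesUpTo z, δ p) / A.card) * ∑ p ∈ primesUpTo z, |R p|
          + ((1 / A.card) * ∑ p ∈ primesUpTo z, |R p|) ^ 2) := by
  set P := primesUpTo z with hPdef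
  set N : ℝ := (A.card : ℝ) with hNdef
  have hN : (0:ℝ) < N := by
    have h1 : (1:ℝ) ≤ (A.card:ℝ) := by exact_mod_cast hA
    rw [hNdef]; linarith
  set U : ℝ := ∑ p ∈ P, δ p with hUdef
  have hU : 0 ≤ U := Finset.sum_nonneg hδ0
  set S1 : ℝ := ∑ p ∈ P, |R p| with hS1def
  set S2 : ℝ := ∑ p ∈ P, ∑ q ∈ P, |Rpq p q| with hS2def
  set SR : ℝ := ∑ p ∈ P, R p with hSRdef
  have hS1nn : 0 ≤ S1 := Finset.sum_nonneg fun p _ => abs_nonneg _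
  have hSRS1 : |SR| ≤ S1 := Finset.abs_sum_le_sum_abs _ _
  set f : α → ℝ := fun a => (((P.filter (fun p => a ∈ Ap p)).card : ℝ)) with hfdef
  set B : Finset α := A.filter (fun a => f a ≤ M / 2) with hBdef
  -- Nat.card conversion
  have hcard : (Nat.card {a : α // a ∈ A ∧
      ((P.filter (fun p => a ∈ Ap p)).card : ℝ) ≤ M / 2} : ℝ) = (B.card : ℝ) := by
    congr 1
    rw [← Set.ncard_coe_finset, ← Nat.card_coe_set_eq]
    apply Nat.card_congr
    exact Equiv.subtypeEquivRight (by intro a; simp [hBdef, hfdef])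
  -- f as sum of indicators
  have hf : ∀ a, f a = ∑ p ∈ P, (if a ∈ Ap p then (1:ℝ) else 0) := by
    intro a
    show ((P.filter (fun p => a ∈ Ap p)).card : ℝ) = _
    rw [Finset.card_filter]
    push_cast
    rfl
  -- first moment
  have key1 : ∀ p ∈ P, ∑ a ∈ A, (if a ∈ Ap p then (1:ℝ) else 0) = ((Ap p).card : ℝ) := by
    intro p hp
    rw [Finset.sum_boole]
    congr 2
    rw [Finset.filter_mem_eq_inter, Finset.inter_eq_right.mpr (hAp p hp)]
  have hsumAp : ∑ p ∈ P, ((Ap p).card : ℝ) = N * U + SR := by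
    rw [hUdef, hSRdef, Finset.mul_sum, ← Finset.sum_add_distrib]
    exact Finset.sum_congr rfl fun p hp => by rw [hR p hp]; ring
  have hMN : M * N = N * U + SR := by
    rw [hM, ← hsumAp]
    exact div_mul_cancel₀ _ hN.ne'
  have hsum1 : ∑ a ∈ A, f a = M * N := by
    calc ∑ a ∈ A, f a = ∑ a ∈ A, ∑ p ∈ P, (if a ∈ Ap p then (1:ℝ) else 0) :=
          Finset.sum_congr rfl fun a _ => hf a
      _ = ∑ p ∈ P, ∑ a ∈ A, (if a ∈ Ap p then (1:ℝ) else 0) := Finset.sum_comm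
      _ = ∑ p ∈ P, ((Ap p).card : ℝ) := Finset.sum_congr rfl key1
      _ = M * N := by rw [hsumAp, hMN]
  -- second moment
  have key2 : ∀ p ∈ P, ∀ q ∈ P,
      ∑ a ∈ A, (if a ∈ Ap p then (1:ℝ) else 0) * (if a ∈ Ap q then (1:ℝ) else 0)
        = (((Ap p ∩ Ap q).card : ℝ)) := by
    intro p hp q hq
    have hh : ∀ a, (if a ∈ Ap p then (1:ℝ) else 0) * (if a ∈ Ap q then (1:ℝ) else 0)
        = if a ∈ Ap p ∩ Ap q then (1:ℝ) else 0 := by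
      intro a; by_cases h1 : a ∈ Ap p <;> by_cases h2 : a ∈ Ap q <;>
        simp [h1, h2, Finset.mem_inter]
    rw [Finset.sum_congr rfl fun a _ => hh a, Finset.sum_boole]
    congr 2
    rw [Finset.filter_mem_eq_inter, Finset.inter_eq_right.mpr]
    exact (Finset.inter_subset_left).trans (hAp p hp)
  have hsum2 : ∑ a ∈ A, (f a) ^ 2 = ∑ p ∈ P, ∑ q ∈ P, (((Ap p ∩ Ap q).card : ℝ)) := by
    calc ∑ a ∈ A, (f a) ^ 2
        = ∑ a ∈ A, ∑ p ∈ P, ∑ q ∈ P,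
            (if a ∈ Ap p then (1:ℝ) else 0) * (if a ∈ Ap q then (1:ℝ) else 0) := by
          refine Finset.sum_congr rfl fun a _ => ?_
          rw [hf a, sq, Finset.sum_mul_sum]
      _ = ∑ p ∈ P, ∑ a ∈ A, ∑ q ∈ P,
            (if a ∈ Ap p then (1:ℝ) else 0) * (if a ∈ Ap q then (1:ℝ) else 0) :=
          Finset.sum_comm
      _ = ∑ p ∈ P, ∑ q ∈ P, ∑ a ∈ A,
            (if a ∈ Ap p then (1:ℝ) else 0) * (if a ∈ Ap q then (1:ℝ) else 0) :=
          Finset.sum_congr rfl fun p _ => Finset.sum_comm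
      _ = ∑ p ∈ P, ∑ q ∈ P, (((Ap p ∩ Ap q).card : ℝ)) :=
          Finset.sum_congr rfl fun p hp => Finset.sum_congr rfl fun q hq => key2 p hp q hq
  -- bound on second moment
  have hsum2bound : ∑ a ∈ A, (f a) ^ 2 ≤ N * U ^ 2 + S2 + N * U := by
    rw [hsum2]
    have hterm : ∀ p ∈ P, ∀ q ∈ P, (((Ap p ∩ Ap q).card : ℝ))
        ≤ δ p * δ q * N + |Rpq p q| + (if p = q then δ p * N else 0) := by
      intro p hp q hq
      by_cases hpq : p = q
      · subst hpq
        simp only [Finset.inter_self, eq_self_iff_true, if_true]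
        rw [hR p hp, hRpp p hp]
        have h1 : 0 ≤ δ p * δ p * N := by
          have := hδ0 p hp; positivity
        have h2 : R p ≤ |R p| := le_abs_self _
        linarith
      · rw [hRpq p hp q hq hpq, if_neg hpq]
        have : Rpq p q ≤ |Rpq p q| := le_abs_self _
        linarith
    calc ∑ p ∈ P, ∑ q ∈ P, (((Ap p ∩ Ap q).card : ℝ))
        ≤ ∑ p ∈ P, ∑ q ∈ P, (δ p * δ q * N + |Rpq p q| + (if p = q then δ p * N else 0)) :=
          Finset.sum_le_sum fun p hp => Finset.sum_le_sum fun q hq => hterm p hp q hq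
      _ = N * U ^ 2 + S2 + N * U := by
          simp only [Finset.sum_add_distrib]
          have e1 : ∑ p ∈ P, ∑ q ∈ P, δ p * δ q * N = N * U ^ 2 := by
            have hUU : U * U = ∑ p ∈ P, ∑ q ∈ P, δ p * δ q := Finset.sum_mul_sum P P δ δ
            calc ∑ p ∈ P, ∑ q ∈ P, δ p * δ q * N
                = (∑ p ∈ P, ∑ q ∈ P, δ p * δ q) * N := by
                  rw [Finset.sum_mul]
                  exact Finset.sum_congr rfl fun p _ => by rw [Finset.sum_mul]
              _ = N * U ^ 2 := by rw [← hUU]; ring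
          have e2 : ∑ p ∈ P, ∑ q ∈ P, (if p = q then δ p * N else 0) = N * U := by
            rw [hUdef, Finset.mul_sum]
            refine Finset.sum_congr rfl fun p hp => ?_
            rw [Finset.sum_ite_eq P p (fun _ => δ p * N), if_pos hp]
            ring
          rw [e1, e2, ← hS2def]
  -- variance identity
  have hvar : ∑ a ∈ A, (f a - M) ^ 2 = (∑ a ∈ A, (f a) ^ 2) - M ^ 2 * N := by
    have expand : ∑ a ∈ A, (f a - M) ^ 2
        = ∑ a ∈ A, ((f a) ^ 2 - 2 * M * f a + M ^ 2) :=
      Finset.sum_congr rfl fun a _ => by ring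
    rw [expand, Finset.sum_add_distrib, Finset.sum_sub_distrib, ← Finset.mul_sum,
      hsum1, Finset.sum_const, nsmul_eq_mul, ← hNdef]
    ring
  -- Chebyshev
  have hcheb : (B.card : ℝ) * (M / 2) ^ 2 ≤ ∑ a ∈ A, (f a - M) ^ 2 := by
    have h1 : ∑ a ∈ B, (f a - M) ^ 2 ≤ ∑ a ∈ A, (f a - M) ^ 2 :=
      Finset.sum_le_sum_of_subset_of_nonneg (Finset.filter_subset _ _)
        (fun a _ _ => sq_nonneg _)
    have h2 : (B.card : ℝ) * (M / 2) ^ 2 ≤ ∑ a ∈ B, (f a - M) ^ 2 := by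
      have := Finset.card_nsmul_le_sum B (fun a => (f a - M) ^ 2) ((M / 2) ^ 2)
        (fun a ha => by
          have hfa : f a ≤ M / 2 := (Finset.mem_filter.mp ha).2
          have : M / 2 ≤ M - f a := by linarith
          have h0 : (0:ℝ) ≤ M / 2 := by linarith
          calc (M / 2) ^ 2 ≤ (M - f a) ^ 2 := by nlinarith
            _ = (f a - M) ^ 2 := by ring)
      simpa [nsmul_eq_mul] using this
    linarith
  -- lower bound on M^2 * N
  have hMsq : N * U ^ 2 - 2 * U * S1 ≤ M ^ 2 * N := by
    have hsq : M ^ 2 * N * N = (N * U + SR) ^ 2 := by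
      rw [← hMN]; ring
    have hSR : -S1 ≤ SR := neg_le_of_abs_le hSRS1
    have key : (N * U ^ 2 - 2 * U * S1) * N ≤ M ^ 2 * N * N := by
      rw [hsq]
      nlinarith [sq_nonneg SR, mul_nonneg (mul_nonneg hN.le hU) (by linarith : (0:ℝ) ≤ SR + S1)]
    exact le_of_mul_le_mul_right key hN
  -- combine
  have hfinal : (B.card : ℝ) * (M ^ 2 / 4) ≤ N * U + S2 + 2 * U * S1 + S1 ^ 2 / N := by
    have h1 : (B.card : ℝ) * (M ^ 2 / 4) ≤ (∑ a ∈ A, (f a) ^ 2) - M ^ 2 * N := by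
      have : (B.card : ℝ) * (M / 2) ^ 2 = (B.card : ℝ) * (M ^ 2 / 4) := by ring
      rw [← this, ← hvar]; exact hcheb
    have hS1sq : 0 ≤ S1 ^ 2 / N := div_nonneg (sq_nonneg _) hN.le
    linarith
  clear_value f B
  clear hf key1 key2 hsum1 hsum2 hsum2bound hvar hcheb hBdef hfdef
  rw [hcard]
  clear hcard
  clear_value N U S1 S2 SR
  have hM2 : (0:ℝ) < M ^ 2 := pow_pos hMpos 2
  have hRHS : 4 * N / M ^ 2 * (U + (1 / N) * S2 + (2 * U / N) * S1 + ((1 / N) * S1) ^ 2)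
      = ((N * U + S2 + 2 * U * S1 + S1 ^ 2 / N) * 4) / M ^ 2 := by
    field_simp
  rw [hRHS, le_div_iff₀ hM2]
  nlinarith [hfinal]
end

section
/- Let 𝓐 be a finite set of cardinality N ≥ 1 and z ≥ 1 a real number. For each prime p ≤ z let 𝓐_p ⊆ 𝓐, and suppose given real numbers 0 ≤ δ_p < 1 and R_p with #𝓐_p = δ_p N + R_p; for distinct primes p, q ≤ z write #(𝓐_p ∩ 𝓐_q) = δ_p δ_q N + R_{p,q}, and set R_{p,p} = R_p. Let N(a) = #{p ≤ z : a ∈ 𝓐_p}, M(z) = (1/N)·Σ_{p ≤ z} #𝓐_p, and U(z) = Σ_{p ≤ z} δ_p. Then (1/N)·Σ_{a ∈ 𝓐} (N(a) − M(z))² ≤ U(z) + (1/N)·Σ_{p,q ≤ z} |R_{p,q}| + 2U(z)·((1/N)·Σ_{p ≤ z} |R_p|) + ((1/N)·Σ_{p ≤ z} |R_p|)². -/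
open scoped Classical

/-- **The variance bound (inequality (3.2)) in the proof of the Chebyshev sieve.**
With the notation of the Chebyshev sieve,
`(1/N)Σ_{a∈𝓐}(N(a) − M(z))² ≤ U(z) + (1/N)Σ_{p,q}|R_{p,q}| + 2U(z)(1/N)Σ_p|R_p|
 + ((1/N)Σ_p|R_p|)²`. -/
theorem chebyshev_sieve_variance {α : Type*} (A : Finset α) (hA : 1 ≤ A.card)
    (z : ℝ) (hz : 1 ≤ z)
    (Ap : ℕ → Finset α) (hAp : ∀ p ∈ primesUpTo z, Ap p ⊆ A)
    (δ R : ℕ → ℝ)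
    (hδ0 : ∀ p ∈ primesUpTo z, 0 ≤ δ p) (hδ1 : ∀ p ∈ primesUpTo z, δ p < 1)
    (hR : ∀ p ∈ primesUpTo z, ((Ap p).card : ℝ) = δ p * A.card + R p)
    (Rpq : ℕ → ℕ → ℝ)
    (hRpq : ∀ p ∈ primesUpTo z, ∀ q ∈ primesUpTo z, p ≠ q →
      (((Ap p ∩ Ap q).card : ℝ)) = δ p * δ q * A.card + Rpq p q)
    (hRpp : ∀ p ∈ primesUpTo z, Rpq p p = R p)
    (M : ℝ) (hM : M = (∑ p ∈ primesUpTo z, ((Ap p).card : ℝ)) / A.card) :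
    (1 / A.card) * ∑ a ∈ A,
        ((((primesUpTo z).filter (fun p => a ∈ Ap p)).card : ℝ) - M) ^ 2
      ≤ (∑ p ∈ primesUpTo z, δ p)
          + (1 / A.card) * ∑ p ∈ primesUpTo z, ∑ q ∈ primesUpTo z, |Rpq p q|
          + 2 * (∑ p ∈ primesUpTo z, δ p) *
              ((1 / A.card) * ∑ p ∈ primesUpTo z, |R p|)
          + ((1 / A.card) * ∑ p ∈ primesUpTo z, |R p|) ^ 2 := by
  set P := primesUpTo z with hP
  have hN : (0 : ℝ) < A.card := by exact_mod_cast hA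
  set N : ℝ := (A.card : ℝ) with hNdef
  have hNne : N ≠ 0 := hN.ne'
  have hNinv : 0 < 1 / N := one_div_pos.mpr hN
  set f : α → ℝ := fun a => ((P.filter (fun p => a ∈ Ap p)).card : ℝ) with hf
  have hfa : ∀ a, f a = ∑ p ∈ P, (if a ∈ Ap p then (1 : ℝ) else 0) := by
    intro a
    simp only [hf]
    rw [Finset.card_filter]
    push_cast
    rfl
  have hAinter : ∀ p ∈ P, A ∩ Ap p = Ap p := fun p hp =>
    Finset.inter_eq_right.mpr (hAp p hp)
  have hsum_ind : ∀ p ∈ P, ∑ a ∈ A, (if a ∈ Ap p then (1 : ℝ) else 0) = ((Ap p).card : ℝ) := by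
    intro p hp
    rw [Finset.sum_ite_mem, hAinter p hp, Finset.sum_const, nsmul_eq_mul, mul_one]
  have hsum1 : ∑ a ∈ A, f a = ∑ p ∈ P, ((Ap p).card : ℝ) := by
    simp only [hfa]
    rw [Finset.sum_comm]
    exact Finset.sum_congr rfl hsum_ind
  have hsum2 : ∑ a ∈ A, (f a) ^ 2 = ∑ p ∈ P, ∑ q ∈ P, ((Ap p ∩ Ap q).card : ℝ) := by
    have h1 : ∀ a, (f a) ^ 2
        = ∑ p ∈ P, ∑ q ∈ P, (if a ∈ Ap p ∩ Ap q then (1 : ℝ) else 0) := by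
      intro a
      rw [sq, hfa a, Finset.sum_mul_sum]
      refine Finset.sum_congr rfl fun p _ => Finset.sum_congr rfl fun q _ => ?_
      by_cases h1 : a ∈ Ap p <;> by_cases h2 : a ∈ Ap q <;>
        simp [h1, h2, Finset.mem_inter]
    simp only [h1]
    rw [Finset.sum_comm]
    refine Finset.sum_congr rfl fun p hp => ?_
    rw [Finset.sum_comm]
    refine Finset.sum_congr rfl fun q hq => ?_
    have hsub : Ap p ∩ Ap q ⊆ A := fun x hx => hAp p hp (Finset.mem_inter.mp hx).1
    rw [Finset.sum_ite_mem, Finset.inter_eq_right.mpr hsub, Finset.sum_const, nsmul_eq_mul,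
      mul_one]
  set U : ℝ := ∑ p ∈ P, δ p with hU
  set S : ℝ := (1 / N) * ∑ p ∈ P, R p with hS
  set S' : ℝ := (1 / N) * ∑ p ∈ P, |R p| with hS'
  set T : ℝ := (1 / N) * ∑ p ∈ P, ∑ q ∈ P, |Rpq p q| with hT
  have hU0 : 0 ≤ U := Finset.sum_nonneg hδ0
  -- M = U + S
  have hMsum : ∑ p ∈ P, ((Ap p).card : ℝ) = U * N + S * N := by
    rw [Finset.sum_congr rfl hR, Finset.sum_add_distrib, ← Finset.sum_mul, hS]
    field_simp
    rw [hU]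
    ring
  have hMeq : M = U + S := by
    rw [hM, hMsum]
    field_simp
  -- variance identity
  have hvar : ∑ a ∈ A, (f a - M) ^ 2 = (∑ a ∈ A, (f a) ^ 2) - N * M ^ 2 := by
    have : ∀ a ∈ A, (f a - M) ^ 2 = (f a) ^ 2 - 2 * M * f a + M ^ 2 := by
      intros; ring
    rw [Finset.sum_congr rfl this, Finset.sum_add_distrib, Finset.sum_sub_distrib,
      ← Finset.mul_sum, hsum1, hMsum, Finset.sum_const, nsmul_eq_mul]
    rw [hMeq]
    ring
  -- bound on the double sum
  have hdouble : ∑ p ∈ P, ∑ q ∈ P, ((Ap p ∩ Ap q).card : ℝ)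
      ≤ U * U * N + (∑ p ∈ P, ∑ q ∈ P, |Rpq p q|) + U * N := by
    have hpt : ∀ p ∈ P, ∀ q ∈ P, ((Ap p ∩ Ap q).card : ℝ)
        ≤ δ p * δ q * N + |Rpq p q| + (if p = q then δ p * N else 0) := by
      intro p hp q hq
      by_cases hpq : p = q
      · subst hpq
        rw [if_pos rfl, Finset.inter_self, hR p hp, hRpp p hp]
        have h1 : R p ≤ |R p| := le_abs_self _
        have h2 : 0 ≤ δ p * δ p * N := mul_nonneg (mul_nonneg (hδ0 p hp) (hδ0 p hp)) hN.le
        linarith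
      · rw [hRpq p hp q hq hpq, if_neg hpq]
        have := le_abs_self (Rpq p q)
        linarith
    calc ∑ p ∈ P, ∑ q ∈ P, ((Ap p ∩ Ap q).card : ℝ)
        ≤ ∑ p ∈ P, ∑ q ∈ P, (δ p * δ q * N + |Rpq p q| + (if p = q then δ p * N else 0)) := by
          refine Finset.sum_le_sum fun p hp => Finset.sum_le_sum fun q hq => hpt p hp q hq
      _ = U * U * N + (∑ p ∈ P, ∑ q ∈ P, |Rpq p q|) + U * N := by
          simp only [Finset.sum_add_distrib]
          have hdiag : ∑ p ∈ P, ∑ q ∈ P, (if p = q then δ p * N else 0) = U * N := by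
            rw [hU, Finset.sum_mul]
            refine Finset.sum_congr rfl fun p hp => ?_
            rw [Finset.sum_ite_eq P p (fun _ => δ p * N), if_pos hp]
          rw [hdiag]
          have : ∑ p ∈ P, ∑ q ∈ P, δ p * δ q * N = U * U * N := by
            rw [hU, Finset.sum_mul, Finset.sum_mul]
            exact Finset.sum_congr rfl fun p _ => by
              rw [← Finset.sum_mul, ← Finset.mul_sum]
          rw [this]
  have habsS : |S| ≤ S' := by
    rw [hS, hS', abs_mul, abs_of_pos hNinv]
    exact mul_le_mul_of_nonneg_left (Finset.abs_sum_le_sum_abs _ _) hNinv.le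
  have key : (1 / N) * ∑ a ∈ A, (f a - M) ^ 2 ≤ U * U + T + U - M ^ 2 := by
    rw [hvar, mul_sub]
    have h1 : (1 / N) * (N * M ^ 2) = M ^ 2 := by field_simp
    rw [h1, hsum2]
    have h2 : (1 / N) * (∑ p ∈ P, ∑ q ∈ P, ((Ap p ∩ Ap q).card : ℝ))
        ≤ (1 / N) * (U * U * N + (∑ p ∈ P, ∑ q ∈ P, |Rpq p q|) + U * N) :=
      mul_le_mul_of_nonneg_left hdouble hNinv.le
    have h3 : (1 / N) * (U * U * N + (∑ p ∈ P, ∑ q ∈ P, |Rpq p q|) + U * N)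
        = U * U + T + U := by
      rw [hT]; field_simp
    linarith
  have hfinal : U * U + T + U - M ^ 2 ≤ U + T + 2 * U * S' + S' ^ 2 := by
    rw [hMeq]
    have h1 : -S ≤ S' := (neg_le_abs S).trans habsS
    nlinarith [mul_nonneg hU0 (by linarith : (0:ℝ) ≤ S' + S), sq_nonneg S, sq_nonneg S']
  calc (1 / N) * ∑ a ∈ A, (f a - M) ^ 2 ≤ U * U + T + U - M ^ 2 := key
    _ ≤ U + T + 2 * U * S' + S' ^ 2 := hfinal
end
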